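/- Let e be a positive integer and let (x, y, z, w) be a solution in positive integers of (4^e−1)^x + 4^{e·y} + (4^e+1)^z = (4^e+2)^w such that (e, x, y, z, w) ≠ (1, 3, 1, 1, 2) and (e, x, y, z, w) ≠ (1, 3, 3, 3, 3). Then w ≥ 4e. -/

import Mathlib

private lemma expand_pow (a : ℤ) (k : ℕ) :
    ∃ C t : ℤ, 2*C = (k:ℤ)*((k:ℤ)-1) ∧ (1+a)^k = 1 + k*a + C*a^2 + a^3*t := by
  induction k with
  | zero => exact ⟨0, 0, by norm_num, by norm_num⟩
  | succ k ih =>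
    obtain ⟨C, t, hC, h⟩ := ih
    refine ⟨C + k, C + t + a*t, ?_, ?_⟩
    · push_cast; linear_combination hC
    · rw [pow_succ, h]; push_cast; ring

private lemma odd_factor_lt {i j : ℕ} {A B : ℤ} (hA : Odd A) (h : 2^i * A = 2^j * B) (hij : i < j) : False := by
  have h2 : ((2:ℤ)^i) ≠ 0 := by positivity
  have hj : (2:ℤ)^j = 2^i * 2^(j-i) := by rw [← pow_add]; congr 1; omega
  rw [hj, mul_assoc] at h
  have hAe : A = 2^(j-i) * B := mul_left_cancel₀ h2 h
  have hdvd : (2:ℤ) ∣ A := hAe ▸ (dvd_pow_self (2:ℤ) (by omega : j - i ≠ 0)).mul_right B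
  rcases hA with ⟨c, hc⟩
  omega

private lemma two_pow_eq {i j : ℕ} {A B : ℤ} (hA : Odd A) (hB : Odd B) (h : 2^i * A = 2^j * B) : i = j ∧ A = B := by
  have hij : i = j := by
    rcases lt_trichotomy i j with h1 | h1 | h1
    exacts [(odd_factor_lt hA h h1).elim, h1, (odd_factor_lt hB h.symm h1).elim]
  subst hij
  exact ⟨rfl, mul_left_cancel₀ (by positivity : ((2:ℤ)^i) ≠ 0) h⟩

private lemma even_pow' {a : ℤ} {n : ℕ} (hn : n ≠ 0) (ha : Even a) : Even (a^n) := by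
  cases n with
  | zero => exact absurd rfl hn
  | succ k => rw [pow_succ]; exact ha.mul_left _

private lemma odd_cast {n : ℕ} (h : Odd n) : Odd (n : ℤ) := by
  obtain ⟨k, hk⟩ := h; exact ⟨k, by push_cast [hk]; ring⟩

private lemma sixteen_le (e : ℕ) (he : 3 ≤ e) : 16*e ≤ 4^e := by
  induction e, he using Nat.le_induction with
  | base => norm_num
  | succ n hn ih => rw [pow_succ]; omega

set_option maxHeartbeats 1000000 in
theorem w_ge_four_e (e x y z w : ℕ) (he : 0 < e)
    (hx : 0 < x) (hy : 0 < y) (hz : 0 < z) (hw : 0 < w)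
    (heq : (4 ^ e - 1) ^ x + 4 ^ (e * y) + (4 ^ e + 1) ^ z = (4 ^ e + 2) ^ w)
    (hne1 : (e, x, y, z, w) ≠ (1, 3, 1, 1, 2))
    (hne2 : (e, x, y, z, w) ≠ (1, 3, 3, 3, 3)) :
    4 * e ≤ w := by
  by_contra hlt
  push_neg at hlt
  rcases eq_or_lt_of_le (show 1 ≤ e from he) with he1 | he2
  · -- e = 1
    subst he1
    simp only [pow_one, one_mul] at heq hlt ⊢
    norm_num at heq
    have p1 : 0 < 3^x := Nat.pow_pos (by norm_num)
    have p2 : 0 < 4^y := Nat.pow_pos (by norm_num)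
    have p3 : 0 < 5^z := Nat.pow_pos (by norm_num)
    have hw3 : w ≤ 3 := by omega
    have h6 : (6:ℕ)^w ≤ 216 := by
      calc (6:ℕ)^w ≤ 6^3 := Nat.pow_le_pow_right (by norm_num) hw3
      _ = 216 := by norm_num
    have hx4 : x ≤ 4 := by
      by_contra hc
      have : (3:ℕ)^5 ≤ 3^x := Nat.pow_le_pow_right (by norm_num) (by omega)
      omega
    have hy3 : y ≤ 3 := by
      by_contra hc
      have : (4:ℕ)^4 ≤ 4^y := Nat.pow_le_pow_right (by norm_num) (by omega)
      omega
    have hz3 : z ≤ 3 := by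
      by_contra hc
      have : (5:ℕ)^4 ≤ 5^z := Nat.pow_le_pow_right (by norm_num) (by omega)
      omega
    interval_cases w <;> interval_cases x <;> interval_cases y <;> interval_cases z <;>
      first
        | (exact absurd rfl hne1)
        | (exact absurd rfl hne2)
        | (revert heq; norm_num)
  · -- e ≥ 2
    have h1le : (1:ℕ) ≤ 4^e := Nat.one_le_pow _ _ (by norm_num)
    have hM16 : 16 ≤ 4^e := by calc (16:ℕ) = 4^2 := by norm_num
                                    _ ≤ 4^e := Nat.pow_le_pow_right (by norm_num) he2
    have hw2 : 2 ≤ w := by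
      by_contra hc
      have hw1 : w = 1 := by omega
      subst hw1
      have t1 : 4^e - 1 ≤ (4^e-1)^x := Nat.le_self_pow hx.ne' _
      have t2 : 4^e ≤ 4^(e*y) := Nat.pow_le_pow_right (by norm_num) (Nat.le_mul_of_pos_right e hy)
      have t3 : 4^e + 1 ≤ (4^e+1)^z := Nat.le_self_pow hz.ne' _
      simp only [pow_one] at heq
      omega
    -- z odd
    have hzodd : Odd z := by
      rcases Nat.even_or_odd z with hze | hzo
      · exfalso
        have h := congrArg (Nat.cast : ℕ → ZMod 3) heq
        push_cast [Nat.cast_sub h1le] at h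
        rw [show (4 : ZMod 3) = 1 by decide] at h
        rw [one_pow, one_pow] at h
        norm_num at h
        rw [zero_pow hx.ne', show (3:ZMod 3) = 0 by decide, zero_pow hw.ne',
          show (2 : ZMod 3) = -1 by decide, hze.neg_one_pow] at h
        revert h; decide
      · exact hzo
    -- x odd
    have hxodd : Odd x := by
      rcases Nat.even_or_odd x with hxe | hxo
      · exfalso
        have h := congrArg (Nat.cast : ℕ → ZMod 4) heq
        push_cast [Nat.cast_sub h1le] at h
        have h40 : ((4:ZMod 4))^e = 0 := by
          rw [show (4:ZMod 4) = 0 by decide, zero_pow he.ne']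
        rw [pow_mul, h40] at h
        rw [show (0-1 : ZMod 4) = -1 by decide, hxe.neg_one_pow, zero_pow hy.ne'] at h
        rw [show (0+1 : ZMod 4) = 1 by decide, one_pow, show (0+2:ZMod 4) = 2 by decide] at h
        have h2w : (2:ZMod 4)^w = 0 := by
          have h22 : (2:ZMod 4)^w = 2^2 * 2^(w-2) := by rw [← pow_add]; congr 1; omega
          rw [h22, show (2:ZMod 4)^2 = 0 by decide, zero_mul]
        rw [h2w] at h
        revert h; decide
      · exact hxo
    -- y odd
    have hyodd : Odd y := by
      rcases Nat.even_or_odd y with hye | hyo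
      · exfalso
        have h := congrArg (Nat.cast : ℕ → ZMod (4^e+1)) heq
        push_cast [Nat.cast_sub h1le] at h
        have h40 : ((4:ZMod (4^e+1)))^e = -1 := by
          have h0 : ((4^e + 1 : ℕ) : ZMod (4^e+1)) = 0 := ZMod.natCast_self _
          push_cast at h0
          linear_combination h0
        rw [pow_mul, h40] at h
        rw [hye.neg_one_pow] at h
        rw [show (-1 + 1 : ZMod (4^e+1)) = 0 by ring, zero_pow hz.ne'] at h
        rw [show (-1 + 2 : ZMod (4^e+1)) = 1 by ring, one_pow] at h
        rw [show (-1 - 1 : ZMod (4^e+1)) = -2 by ring, hxodd.neg_pow] at h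
        have h2x : ((2^x : ℕ) : ZMod (4^e+1)) = 0 := by push_cast; linear_combination -h
        have hdvd := (ZMod.natCast_eq_zero_iff _ _).mp h2x
        obtain ⟨k, -, hk⟩ := (Nat.dvd_prime_pow Nat.prime_two).mp hdvd
        have h4even : 2 ∣ 4^e := dvd_pow (by norm_num : (2:ℕ) ∣ 4) he.ne'
        rcases k with _ | k
        · rw [pow_zero] at hk; omega
        · rw [pow_succ] at hk
          have hd2 : 2 ∣ 2^(k+1-1)*2 := dvd_mul_left 2 _
          omega
      · exact hyo
    -- size bounds
    have ppos1 : 0 < 4^(e*y) := Nat.pow_pos (by norm_num)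
    have ppos2 : 0 < (4^e+1)^z := Nat.pow_pos (by norm_num)
    have ppos3 : 0 < (4^e-1)^x := Nat.pow_pos (by omega)
    have hxb : (4^e-1)^x < (4^e+2)^w := by omega
    have hzb : (4^e+1)^z < (4^e+2)^w := by omega
    have hx2w : x < 2*w := by
      have hb : (4^e+2) ≤ (4^e-1)^2 := by
        obtain ⟨A, hA⟩ : ∃ A, 4^e = A + 16 := ⟨4^e - 16, by omega⟩
        rw [hA, show A + 16 - 1 = A + 15 from by omega]
        nlinarith
      have h1 : (4^e-1)^x < (4^e-1)^(2*w) := by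
        calc (4^e-1)^x < (4^e+2)^w := hxb
          _ ≤ ((4^e-1)^2)^w := Nat.pow_le_pow_left hb w
          _ = (4^e-1)^(2*w) := by rw [← pow_mul]
      exact (Nat.pow_lt_pow_iff_right (by omega)).mp h1
    have hz2w : z < 2*w := by
      have hb : (4^e+2) ≤ (4^e+1)^2 := by nlinarith
      have h1 : (4^e+1)^z < (4^e+1)^(2*w) := by
        calc (4^e+1)^z < (4^e+2)^w := hzb
          _ ≤ ((4^e+1)^2)^w := Nat.pow_le_pow_left hb w
          _ = (4^e+1)^(2*w) := by rw [← pow_mul]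
      exact (Nat.pow_lt_pow_iff_right (by omega)).mp h1
    have hs4 : x + z < 4^e := by
      rcases lt_or_ge e 3 with he3 | he3
      · have he2' : e = 2 := by omega
        subst he2'
        have hw7 : w ≤ 7 := by omega
        norm_num at hxb hzb
        have h18 : (18:ℕ)^w ≤ 18^7 := Nat.pow_le_pow_right (by norm_num) hw7
        have hx7 : x ≤ 7 := by
          by_contra hc
          have h1 : (15:ℕ)^8 ≤ 15^x := Nat.pow_le_pow_right (by norm_num) (by omega)
          have h2 : (15:ℕ)^8 < 18^7 := by omega
          norm_num at h2
        have hz7 : z ≤ 7 := by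
          by_contra hc
          have h1 : (17:ℕ)^8 ≤ 17^z := Nat.pow_le_pow_right (by norm_num) (by omega)
          have h2 : (17:ℕ)^8 < 18^7 := by omega
          norm_num at h2
        norm_num
        omega
      · have h16 : 16*e ≤ 4^e := sixteen_le e he3
        omega
    have h4Z : (4:ℤ)^e = 2^(2*e) := by rw [show (4:ℤ) = 2^2 by norm_num, ← pow_mul]
    have hmsplit : (2:ℤ)^(2*e) = 2 * 2^(2*e-1) := by
      rw [← pow_succ']
      congr 1; omega
    have hEq : ((2:ℤ)^(2*e) - 1)^x + ((2:ℤ)^(2*e))^y + (1 + (2:ℤ)^(2*e))^z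
        = 2^w * (1 + (2:ℤ)^(2*e-1))^w := by
      have h := congrArg (Nat.cast : ℕ → ℤ) heq
      push_cast [Nat.cast_sub h1le] at h
      rw [show (4:ℤ)^(e*y) = ((4:ℤ)^e)^y from by rw [pow_mul]] at h
      rw [h4Z] at h
      rw [show ((2:ℤ)^(2*e) + 2)^w = (2 * (1 + 2^(2*e-1)))^w from by rw [hmsplit]; ring,
        mul_pow, show ((2:ℤ)^(2*e) + 1)^z = (1 + (2:ℤ)^(2*e))^z from by rw [add_comm]] at h
      exact h
    obtain ⟨Cz, tz, hCz, hZexp⟩ := expand_pow ((2:ℤ)^(2*e)) z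
    obtain ⟨Cx, tx, hCx, hXx⟩ := expand_pow (-((2:ℤ)^(2*e))) x
    have hXexp : ((2:ℤ)^(2*e) - 1)^x
        = -(1 + x*(-(2^(2*e))) + Cx*(-(2^(2*e)))^2 + (-(2^(2*e)))^3*tx) := by
      rw [show (1 + -((2:ℤ)^(2*e))) = -((2:ℤ)^(2*e) - 1) from by ring, hxodd.neg_pow] at hXx
      linarith [hXx]
    rw [hXexp, hZexp] at hEq
    -- m^w expansion
    obtain ⟨Cw, tw, hCw, hmwE⟩ := expand_pow ((2:ℤ)^(2*e-1)) w
    have hmodd : Odd ((1 + (2:ℤ)^(2*e-1))^w) := by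
      refine Odd.pow ?_
      rw [add_comm]
      have hE : Even ((2:ℤ)^(2*e-1)) := ⟨2^(2*e-2), by rw [← two_mul, ← pow_succ']; congr 1; omega⟩
      exact hE.add_one
    have hMeven : Even ((2:ℤ)^(2*e)) := ⟨2^(2*e-1), by rw [← two_mul]; exact hmsplit⟩
    -- case y = 1
    rcases eq_or_lt_of_le (show 1 ≤ y from hy) with hy1 | hy2
    · rw [← hy1, pow_one] at hEq
      have hid : (2:ℤ)^(2*e) * (((x:ℤ) + z + 1) + 2^(2*e) * ((Cz - Cx) + 2^(2*e) * (tz + tx)))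
          = 2^w * (1 + (2:ℤ)^(2*e-1))^w := by
        rw [← hEq]; ring
      have hOodd : Odd (((x:ℤ) + z + 1) + 2^(2*e) * ((Cz - Cx) + 2^(2*e) * (tz + tx))) := by
        refine Odd.add_even ?_ (hMeven.mul_right _)
        exact (Even.add_one ((odd_cast hxodd).add_odd (odd_cast hzodd)))
      obtain ⟨hwe, hOm⟩ := two_pow_eq hOodd hmodd hid
      -- 2^(2e) ∣ x + z
      have pw : (w:ℤ) = 2*e := by exact_mod_cast congrArg (Nat.cast : ℕ → ℤ) hwe.symm
      have p1 : ((2:ℤ)^(2*e-1))^2 = 2^(2*e)*2^(2*e-2) := by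
        rw [← pow_add, ← pow_mul]; congr 1; omega
      have p2 : ((2:ℤ)^(2*e-1))^3 = 2^(2*e)*2^(4*e-3) := by
        rw [← pow_add, ← pow_mul]; congr 1; omega
      have hdvd : (2:ℤ)^(2*e) ∣ ((x:ℤ) + z) := by
        refine ⟨(e + Cw*2^(2*e-2) + 2^(4*e-3)*tw) - ((Cz - Cx) + 2^(2*e) * (tz + tx)), ?_⟩
        have hms2 : (w:ℤ) * 2^(2*e-1) = e * 2^(2*e) := by
          rw [pw, hmsplit]; ring
        linear_combination hOm + hmwE + hms2 + Cw * p1 + tw * p2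
      have hle := Int.le_of_dvd (by positivity) hdvd
      have hcast : ((4^e : ℕ) : ℤ) = 2^(2*e) := by push_cast; exact h4Z
      have : ((x:ℤ) + z) < 2^(2*e) := by
        rw [← hcast]; exact_mod_cast hs4
      linarith
    · -- y ≥ 2
      have hy3 : 3 ≤ y := by rcases hyodd with ⟨k, hk⟩; omega
      have hseven : Even (x + z) := hxodd.add_odd hzodd
      obtain ⟨a, u, huodd, hsu⟩ := Nat.exists_eq_two_pow_mul_odd (n := x + z) (by omega)
      have hupos : 0 < u := Nat.pos_of_ne_zero (by rintro rfl; rw [mul_zero] at hsu; omega)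
      have ha1 : 1 ≤ a := by
        by_contra hc
        have ha0 : a = 0 := by omega
        rw [ha0, pow_zero, one_mul] at hsu
        rw [hsu] at hseven
        exact (Nat.not_even_iff_odd.mpr huodd) hseven
      have h4n : (4:ℕ)^e = 2^(2*e) := by rw [show (4:ℕ) = 2^2 by norm_num, ← pow_mul]
      have hsN : 2^a * u < 2^(2*e) := by rw [← hsu, ← h4n]; exact hs4
      have ha2e : a < 2*e := by
        have h1 : (2:ℕ)^a < 2^(2*e) :=
          lt_of_le_of_lt (Nat.le_mul_of_pos_right _ hupos) hsN
        exact (Nat.pow_lt_pow_iff_right (by norm_num)).mp h1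
      have huB : u < 2^(2*e-a) := by
        have h1 : (2:ℕ)^a * u < 2^a * 2^(2*e-a) := by
          rw [← pow_add, show a + (2*e-a) = 2*e from by omega]; exact hsN
        exact Nat.lt_of_mul_lt_mul_left h1
      have hMy : ((2:ℤ)^(2*e))^y = ((2:ℤ)^(2*e))^2 * ((2:ℤ)^(2*e))^(y-2) := by
        rw [← pow_add]; congr 1; omega
      have hsuZ : (x:ℤ) + z = 2^a * u := by exact_mod_cast congrArg (Nat.cast : ℕ → ℤ) hsu
      have pA : (2:ℤ)^(2*e+a) = 2^(2*e) * 2^a := by rw [← pow_add]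
      have pB : (2:ℤ)^(2*e+a) * 2^(2*e-a) = ((2:ℤ)^(2*e))^2 := by
        rw [← pow_add, ← pow_mul]; congr 1; omega
      have hid2 : (2:ℤ)^(2*e+a) * ((u:ℤ) + 2^(2*e-a) *
          ((Cz - Cx) + 2^(2*e) * (tz + tx) + ((2:ℤ)^(2*e))^(y-2)))
          = 2^w * (1 + (2:ℤ)^(2*e-1))^w := by
        rw [← hEq, hMy]
        linear_combination (-((2:ℤ)^(2*e))) * hsuZ +
          ((Cz - Cx) + 2^(2*e) * (tz + tx) + ((2:ℤ)^(2*e))^(y-2)) * pB + (u:ℤ) * pA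
      have hO2odd : Odd ((u:ℤ) + 2^(2*e-a) *
          ((Cz - Cx) + 2^(2*e) * (tz + tx) + ((2:ℤ)^(2*e))^(y-2))) := by
        refine (odd_cast huodd).add_even (Even.mul_right ?_ _)
        exact ⟨2^(2*e-a-1), by rw [← two_mul, ← pow_succ']; congr 1; omega⟩
      obtain ⟨hwea, hO2m⟩ := two_pow_eq hO2odd hmodd hid2
      have pC : (2:ℤ)^(2*e-1) = 2^(2*e-a) * 2^(a-1) := by rw [← pow_add]; congr 1; omega
      rw [pC] at hmwE hO2m
      have hu1 : u = 1 := by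
        by_contra hc
        have hdvd : (2:ℤ)^(2*e-a) ∣ ((u:ℤ) - 1) := by
          refine ⟨2^(a-1) * ((w:ℤ) + Cw*(2^(2*e-a)*2^(a-1)) + (2^(2*e-a)*2^(a-1))^2*tw)
            - ((Cz - Cx) + 2^(2*e) * (tz + tx) + ((2:ℤ)^(2*e))^(y-2)), ?_⟩
          linear_combination hO2m + hmwE
        have hpos : (0:ℤ) < (u:ℤ) - 1 := by
          have : 2 ≤ u := by omega
          omega
        have hle := Int.le_of_dvd hpos hdvd
        have huBZ : (u:ℤ) < 2^(2*e-a) := by exact_mod_cast huB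
        linarith
      rw [hu1, mul_one] at hsu
      rw [hu1] at hO2m
      push_cast at hO2m
      -- hO2m : 1 + 2^(2e-a) * K = m^w
      have hK : (2:ℤ)^(2*e-a) * ((Cz - Cx) + 2^(2*e) * (tz + tx) + ((2:ℤ)^(2*e))^(y-2))
          = 2^(2*e-a) * (2^(a-1) * ((w:ℤ) + Cw*(2^(2*e-a)*2^(a-1)) + (2^(2*e-a)*2^(a-1))^2*tw)) := by
        linear_combination hO2m + hmwE
      have hKV : ((Cz - Cx) + 2^(2*e) * (tz + tx) + ((2:ℤ)^(2*e))^(y-2))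
          = 2^(a-1) * ((w:ℤ) + Cw*(2^(2*e-a)*2^(a-1)) + (2^(2*e-a)*2^(a-1))^2*tw) :=
        mul_left_cancel₀ (by positivity : ((2:ℤ)^(2*e-a)) ≠ 0) hK
      have hMy2even : Even (((2:ℤ)^(2*e))^(y-2)) := even_pow' (by omega) hMeven
      rcases eq_or_lt_of_le ha1 with ha1' | ha2
      · -- a = 1
        have ha : a = 1 := ha1'.symm
        have h2a1 : (2:ℕ)^a = 2 := by rw [ha]; norm_num
        rw [h2a1] at hsu
        obtain ⟨hx1, hz1⟩ : x = 1 ∧ z = 1 := by omega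
        subst hx1; subst hz1
        push_cast at hCx hCz
        have hCx0 : Cx = 0 := by linarith
        have hCz0 : Cz = 0 := by linarith
        have hwodd : Odd (w:ℤ) := odd_cast ⟨e, by omega⟩
        have hXeven : Even ((2:ℤ)^(2*e-a)) :=
          ⟨2^(2*e-a-1), by rw [← two_mul, ← pow_succ']; congr 1; omega⟩
        have hVodd : Odd ((2:ℤ)^(a-1) * ((w:ℤ) + Cw*(2^(2*e-a)*2^(a-1)) + (2^(2*e-a)*2^(a-1))^2*tw)) := by
          rw [show a-1 = 0 from by omega, pow_zero]
          simp only [one_mul, mul_one]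
          refine (hwodd.add_even ?_).add_even ?_
          · exact hXeven.mul_left _
          · exact (even_pow' (by norm_num) hXeven).mul_right _
        have hKeven : Even ((Cz - Cx) + 2^(2*e) * (tz + tx) + ((2:ℤ)^(2*e))^(y-2)) := by
          refine Even.add (Even.add ?_ (hMeven.mul_right _)) hMy2even
          rw [hCx0, hCz0]; simp
        rw [hKV] at hKeven
        exact (Int.not_odd_iff_even.mpr hKeven) hVodd
      · -- a ≥ 2
        have hzxZ : (z:ℤ) = 2^a - x := by
          have hc : (x:ℤ) + z = 2^a := by exact_mod_cast congrArg (Nat.cast : ℕ → ℤ) hsu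
          linarith
        have h2a : (2:ℤ)^a = 2^(a-1)*2 := by rw [← pow_succ]; congr 1; omega
        have hcc : Cz - Cx = ((2:ℤ)^(a-1) - x)*(2^(a-1)*2 - 1) := by
          have h1 := hCz
          rw [hzxZ, h2a] at h1
          refine mul_left_cancel₀ (by norm_num : (2:ℤ) ≠ 0) ?_
          linear_combination h1 - hCx
        have hPeven : Even ((2:ℤ)^(a-1)) :=
          ⟨2^(a-2), by rw [← two_mul, ← pow_succ']; congr 1; omega⟩
        have hccodd : Odd (Cz - Cx) := by
          rw [hcc]
          exact (hPeven.sub_odd (odd_cast hxodd)).mul ((hPeven.mul_right 2).sub_odd odd_one)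
        have hKodd : Odd ((Cz - Cx) + 2^(2*e) * (tz + tx) + ((2:ℤ)^(2*e))^(y-2)) :=
          (hccodd.add_even (hMeven.mul_right _)).add_even hMy2even
        rw [hKV] at hKodd
        exact (Int.not_odd_iff_even.mpr (hPeven.mul_right _)) hKodd
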